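/- Corners lie on the boundary: if G is a finite median graph and v is a corner of G with cube C(v) and opposite vertex \overline{v}, then every vertex of C(v) except possibly \overline{v} belongs to the combinatorial boundary ∂X of the cube complex X = X_cube(G); in particular every corner of G is a boundary vertex. -/
import Mathlib


/-- The metric interval between `u` and `v` in a graph `G`. -/
def interval {V : Type*} (G : SimpleGraph V) (u v : V) : Set V :=
  {w | G.dist u w + G.dist w v = G.dist u v}

/-- A graph is median if every triple of vertices has a unique median. -/
def MedianGraph {V : Type*} (G : SimpleGraph V) : Prop :=
  ∀ x y z : V, ∃! m : V,
    m ∈ interval G x y ∧ m ∈ interval G y z ∧ m ∈ interval G z x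

/-- The hypercube graph `Q_n`. -/
def cubeGraph (n : ℕ) : SimpleGraph (Fin n → Bool) :=
  SimpleGraph.fromRel (fun u v => (Finset.univ.filter fun i => u i ≠ v i).card = 1)

/-- `C` is (the vertex set of) a cube of `G`. -/
def IsCube {V : Type*} (G : SimpleGraph V) (C : Finset V) : Prop :=
  ∃ k : ℕ, Nonempty (G.induce (C : Set V) ≃g cubeGraph k)

/-- The cells of the cube complex `X_cube(G)`, identified with their vertex sets. -/
def cells {V : Type*} (G : SimpleGraph V) : Set (Finset V) :=
  {C | C.Nonempty ∧ IsCube G C}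

/-- A cell is maximal if it is maximal by inclusion among cells. -/
def IsMaximalCell {V : Type*} (G : SimpleGraph V) (C : Finset V) : Prop :=
  C ∈ cells G ∧ ∀ D ∈ cells G, ¬ C ⊂ D

/-- The vertices of the combinatorial boundary `∂X` of `X = X_cube(G)`: vertices of some
non-maximal cell that is a facet of exactly one cell (a facet of a cube has half as many
vertices). -/
def boundaryVertices {V : Type*} (G : SimpleGraph V) : Set V :=
  {x | ∃ C ∈ cells G, x ∈ C ∧ ¬ IsMaximalCell G C ∧
        ∃! D : Finset V, D ∈ cells G ∧ C ⊂ D ∧ D.card = 2 * C.card}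


open Finset Function

/-- difference set -/
def dfs {n : ℕ} (u v : Fin n → Bool) : Finset (Fin n) := univ.filter fun i => u i ≠ v i

lemma mem_dfs {n : ℕ} {u v : Fin n → Bool} {k : Fin n} : k ∈ dfs u v ↔ u k ≠ v k := by
  simp [dfs]

lemma dfs_comm {n : ℕ} (u v : Fin n → Bool) : dfs u v = dfs v u := by
  unfold dfs; apply filter_congr; intro i _; simp [ne_comm]

lemma eq_of_dfs_card_zero {n : ℕ} {u v : Fin n → Bool} (h : (dfs u v).card = 0) : u = v := by
  funext k
  by_contra hk
  have : k ∈ dfs u v := mem_dfs.mpr hk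
  simp [Finset.card_eq_zero.mp h] at this

lemma cube_adj_iff {n : ℕ} {u v : Fin n → Bool} :
    (cubeGraph n).Adj u v ↔ (dfs u v).card = 1 := by
  unfold cubeGraph
  rw [SimpleGraph.fromRel_adj]
  constructor
  · rintro ⟨hne, h | h⟩
    · exact h
    · rw [dfs_comm]; exact h
  · intro h
    refine ⟨?_, Or.inl h⟩
    rintro rfl
    simp [dfs] at h

lemma dfs_update_right {n : ℕ} (u p : Fin n → Bool) (i : Fin n) :
    dfs u (Function.update p i (u i)) = (dfs u p).erase i := by
  ext k
  by_cases hk : k = i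
  · subst hk; simp [mem_dfs, Function.update_self]
  · simp [mem_dfs, Function.update_of_ne hk, hk]

lemma dfs_update_left {n : ℕ} (p : Fin n → Bool) (i : Fin n) {c : Bool} (hc : c ≠ p i) :
    dfs (Function.update p i c) p = {i} := by
  ext k
  by_cases hk : k = i
  · subst hk; simp [mem_dfs, Function.update_self, hc]
  · simp [mem_dfs, Function.update_of_ne hk, hk]

lemma dfs_two_updates {n : ℕ} (p : Fin n → Bool) {i j : Fin n} {a b : Bool}
    (hij : i ≠ j) (ha : a ≠ p i) (hb : b ≠ p j) :
    dfs (Function.update (Function.update p i a) j b) p = {i, j} := by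
  ext k
  by_cases hkj : k = j
  · subst hkj
    simp [mem_dfs, Function.update_self, hb, hij]
  · by_cases hki : k = i
    · subst hki
      simp [mem_dfs, Function.update_of_ne hkj, Function.update_self, ha]
    · simp [mem_dfs, Function.update_of_ne hkj, Function.update_of_ne hki, hki, hkj]

lemma dfs_updates_pair {n : ℕ} (p : Fin n → Bool) {i j : Fin n} {a b : Bool}
    (hij : i ≠ j) (ha : a ≠ p i) (hb : b ≠ p j) :
    dfs (Function.update p i a) (Function.update p j b) = {i, j} := by
  ext k
  by_cases hki : k = i
  · subst hki
    simp [mem_dfs, Function.update_self, Function.update_of_ne hij, ha]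
  · by_cases hkj : k = j
    · subst hkj
      simp [mem_dfs, Function.update_self, Function.update_of_ne (Ne.symm hij), hb, ne_comm]
    · simp [mem_dfs, Function.update_of_ne hki, Function.update_of_ne hkj, hki, hkj]

lemma dfs_triangle {n : ℕ} (u v z : Fin n → Bool) : dfs u v ⊆ dfs u z ∪ dfs z v := by
  intro k hk
  rw [mem_dfs] at hk
  rw [mem_union, mem_dfs, mem_dfs]
  by_contra h
  push_neg at h
  exact hk (h.1.trans h.2)

lemma cube_walk {n : ℕ} : ∀ (k : ℕ) (u w : Fin n → Bool), (dfs u w).card = k →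
    ∃ p : (cubeGraph n).Walk u w, p.length = k := by
  intro k
  induction k with
  | zero =>
    intro u w h
    obtain rfl := eq_of_dfs_card_zero h
    exact ⟨SimpleGraph.Walk.nil, rfl⟩
  | succ k ih =>
    intro u w h
    have hne : (dfs u w).Nonempty := card_pos.mp (by omega)
    obtain ⟨i, hi⟩ := hne
    have hi' : u i ≠ w i := mem_dfs.mp hi
    set u' := Function.update u i (w i) with hu'
    have hadj : (cubeGraph n).Adj u u' := by
      rw [cube_adj_iff, dfs_comm, dfs_update_left u i (Ne.symm hi')]
      simp
    have hcard : (dfs u' w).card = k := by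
      have h1 : dfs u' w = (dfs w u).erase i := by
        rw [dfs_comm, dfs_update_right]
      rw [h1, card_erase_of_mem (mem_dfs.mpr (Ne.symm hi')), dfs_comm w u, h]
      omega
    obtain ⟨p, hp⟩ := ih u' w hcard
    exact ⟨SimpleGraph.Walk.cons hadj p, by simp [hp]⟩

section median

variable {V : Type*} {G : SimpleGraph V}

lemma mem_interval_adj (hconn : G.Connected) {x y m : V} (hadj : G.Adj x y)
    (hm : m ∈ interval G x y) : m = x ∨ m = y := by
  have h1 : G.dist x y = 1 := SimpleGraph.dist_eq_one_iff_adj.mpr hadj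
  have := hm
  rw [interval, Set.mem_setOf_eq, h1] at this
  have h0 : G.dist x m = 0 ∨ G.dist m y = 0 := by omega
  rcases h0 with h0 | h0
  · exact Or.inl (hconn.dist_eq_zero_iff.mp h0).symm
  · exact Or.inr (hconn.dist_eq_zero_iff.mp h0)

lemma median_triangle_free (hconn : G.Connected) (hmed : MedianGraph G)
    {x y z : V} (h1 : G.Adj x y) (h2 : G.Adj y z) (h3 : G.Adj x z) : False := by
  obtain ⟨m, ⟨hxy, hyz, hzx⟩, -⟩ := hmed x y z
  rcases mem_interval_adj hconn h1 hxy with rfl | rfl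
  · rcases mem_interval_adj hconn h2 hyz with rfl | rfl
    · exact h1.ne rfl
    · exact h3.ne rfl
  · rcases mem_interval_adj hconn h3.symm (by rwa [interval] at hzx) with rfl | rfl
    · exact h2.ne rfl
    · exact h1.ne rfl

lemma adj_mem_interval (hconn : G.Connected) {a b p : V} (hap : G.Adj a p) (hpb : G.Adj p b)
    (hd : G.dist a b = 2) : p ∈ interval G a b := by
  rw [interval, Set.mem_setOf_eq, hd,
    SimpleGraph.dist_eq_one_iff_adj.mpr hap, SimpleGraph.dist_eq_one_iff_adj.mpr hpb]

lemma median_no_K23 (hconn : G.Connected) (hmed : MedianGraph G)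
    {p q a b c : V} (hpq : p ≠ q) (hnadj : ¬ G.Adj p q)
    (hpa : G.Adj p a) (hqa : G.Adj q a)
    (hpb : G.Adj p b) (hqb : G.Adj q b)
    (hpc : G.Adj p c) (hqc : G.Adj q c)
    (hab : a ≠ b) (hac : a ≠ c) (hbc : b ≠ c) : False := by
  have dist2 : ∀ {s t : V}, s ≠ t → G.Adj p s → G.Adj p t → G.dist s t = 2 := by
    intro s t hst hs ht
    have hnadjst : ¬ G.Adj s t := fun h => median_triangle_free hconn hmed hs h ht
    have hle : G.dist s t ≤ 2 := by
      simpa using SimpleGraph.dist_le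
        (SimpleGraph.Walk.cons hs.symm (SimpleGraph.Walk.cons ht SimpleGraph.Walk.nil))
    have hne0 : G.dist s t ≠ 0 := by
      rw [ne_eq, hconn.dist_eq_zero_iff]; exact hst
    have hne1 : G.dist s t ≠ 1 := by
      rw [ne_eq, SimpleGraph.dist_eq_one_iff_adj]; exact hnadjst
    omega
  obtain ⟨m, -, huniq⟩ := hmed a b c
  have hmedmem : ∀ r : V, G.Adj r a → G.Adj r b → G.Adj r c →
      (r ∈ interval G a b ∧ r ∈ interval G b c ∧ r ∈ interval G c a) := by
    intro r hra hrb hrc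
    exact ⟨adj_mem_interval hconn hra.symm hrb (dist2 hab hpa hpb),
      adj_mem_interval hconn hrb.symm hrc (dist2 hbc hpb hpc),
      adj_mem_interval hconn hrc.symm hra (dist2 (Ne.symm hac) hpc hpa)⟩
  have hp := huniq p (hmedmem p hpa hpb hpc)
  have hq := huniq q (hmedmem q hqa hqb hqc)
  exact hpq (hp.trans hq.symm)

end median

lemma xor_ne_iff (a b c : Bool) : (xor a (xor b c) ≠ b) ↔ (a ≠ c) := by
  cases a <;> cases b <;> cases c <;> decide

lemma dfs_card_succAbove {m : ℕ} (i : Fin (m + 1)) {u v : Fin (m + 1) → Bool}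
    (h : u i = v i) :
    (dfs (fun j => u (i.succAbove j)) (fun j => v (i.succAbove j))).card = (dfs u v).card := by
  apply card_bij (fun j _ => i.succAbove j)
  · intro j hj
    have := mem_dfs.mp hj
    exact mem_dfs.mpr (by simpa using this)
  · intro j1 _ j2 _ hj
    exact Fin.succAbove_right_injective hj
  · intro k hk
    have hki : k ≠ i := by
      intro hki; subst hki; exact (mem_dfs.mp hk) h
    obtain ⟨j, hj⟩ := Fin.exists_succAbove_eq hki
    refine ⟨j, ?_, hj⟩
    rw [mem_dfs]
    show u (i.succAbove j) ≠ v (i.succAbove j)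
    rw [hj]
    exact mem_dfs.mp hk

lemma dist_le_dfs_card {V : Type*} {G : SimpleGraph V} {n : ℕ} {S : Set V}
    (φ : G.induce S ≃g cubeGraph n) (a b : S) :
    G.dist ↑a ↑b ≤ (dfs (φ a) (φ b)).card := by
  obtain ⟨p, hp⟩ := cube_walk (dfs (φ a) (φ b)).card (φ a) (φ b) rfl
  have key := SimpleGraph.dist_le
    ((p.map φ.symm.toEmbedding.toHom).map (SimpleGraph.Embedding.induce S).toHom)
  simp only [SimpleGraph.Walk.length_map, hp] at key
  have e1 : ((SimpleGraph.Embedding.induce (G := G) S).toHom (φ.symm.toEmbedding.toHom (φ a)) : V) = ↑a := by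
    simp
  have e2 : ((SimpleGraph.Embedding.induce (G := G) S).toHom (φ.symm.toEmbedding.toHom (φ b)) : V) = ↑b := by
    simp
  rw [e1, e2] at key
  exact key

lemma xor_ne_iff2 (a b c : Bool) : (xor a (xor b c) ≠ c) ↔ (a ≠ b) := by
  cases a <;> cases b <;> cases c <;> decide

lemma xor_ne_iff3 (a b c : Bool) : (xor a (xor b c) ≠ a) ↔ (b ≠ c) := by
  cases a <;> cases b <;> cases c <;> decide

lemma cell_subset_of_corner {V : Type*} (G : SimpleGraph V)
    (hconn : G.Connected) (hmed : MedianGraph G)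
    (v : V) (C : Finset V) {n : ℕ} (φ : G.induce (C : Set V) ≃g cubeGraph n)
    (hv : v ∈ C) (hnbrs : ∀ u : V, G.Adj v u → u ∈ C)
    (D : Finset V) (hD : IsCube G D) (hvD : v ∈ D) : D ⊆ C := by
  classical
  obtain ⟨k, ⟨ψ⟩⟩ := hD
  have adjC : ∀ a b : (C : Set V), (G.Adj ↑a ↑b ↔ (dfs (φ a) (φ b)).card = 1) := by
    intro a b
    rw [← cube_adj_iff, φ.map_adj_iff]
    exact Iff.rfl
  have adjD : ∀ a b : (D : Set V), (G.Adj ↑a ↑b ↔ (dfs (ψ a) (ψ b)).card = 1) := by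
    intro a b
    rw [← cube_adj_iff, ψ.map_adj_iff]
    exact Iff.rfl
  set v' : (D : Set V) := ⟨v, Finset.mem_coe.mpr hvD⟩ with hvdef
  suffices H : ∀ t : ℕ, ∀ w' : (D : Set V), (dfs (ψ v') (ψ w')).card = t → (w' : V) ∈ C by
    intro w hw
    exact H _ ⟨w, Finset.mem_coe.mpr hw⟩ rfl
  intro t
  induction t using Nat.strong_induction_on with
  | _ t IH =>
  intro wD hcard
  by_cases h0 : t = 0
  · subst h0
    have h1 : ψ v' = ψ wD := eq_of_dfs_card_zero hcard
    have h2 : v' = wD := ψ.injective h1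
    rw [← h2]
    exact hv
  by_cases h1 : t = 1
  · subst h1
    exact hnbrs _ ((adjD v' wD).mpr hcard)
  -- t ≥ 2
  set u : Fin k → Bool := ψ v' with hu
  set p : Fin k → Bool := ψ wD with hp
  have h2 : 1 < (dfs u p).card := by omega
  obtain ⟨i, hi, j, hj, hij⟩ := Finset.one_lt_card.mp h2
  have hui : u i ≠ p i := mem_dfs.mp hi
  have huj : u j ≠ p j := mem_dfs.mp hj
  set p1 : Fin k → Bool := Function.update p i (u i) with hp1
  set p2 : Fin k → Bool := Function.update p j (u j) with hp2
  set q : Fin k → Bool := Function.update p1 j (u j) with hq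
  set wD1 : (D : Set V) := ψ.symm p1 with hwD1
  set wD2 : (D : Set V) := ψ.symm p2 with hwD2
  set zD : (D : Set V) := ψ.symm q with hzD
  have hψ1 : ψ wD1 = p1 := ψ.apply_symm_apply p1
  have hψ2 : ψ wD2 = p2 := ψ.apply_symm_apply p2
  have hψz : ψ zD = q := ψ.apply_symm_apply q
  -- distance facts to v'
  have hd1 : (dfs u p1).card = t - 1 := by
    rw [hp1, dfs_update_right, card_erase_of_mem hi, hcard]
  have hd2 : (dfs u p2).card = t - 1 := by
    rw [hp2, dfs_update_right, card_erase_of_mem hj, hcard]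
  have hjmem : j ∈ dfs u p1 := by
    rw [hp1, dfs_update_right]
    exact Finset.mem_erase.mpr ⟨Ne.symm hij, hj⟩
  have hdq : (dfs u q).card = t - 2 := by
    rw [hq, dfs_update_right, card_erase_of_mem hjmem, hd1]
    omega
  -- memberships in C by induction
  have hw1C : (wD1 : V) ∈ C := IH (t - 1) (by omega) wD1 (by rw [hψ1]; exact hd1)
  have hw2C : (wD2 : V) ∈ C := IH (t - 1) (by omega) wD2 (by rw [hψ2]; exact hd2)
  have hzC : (zD : V) ∈ C := IH (t - 2) (by omega) zD (by rw [hψz]; exact hdq)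
  -- adjacency facts in G
  have hp1i : p1 i = u i := by rw [hp1]; simp
  have hp1j : p1 j = p j := by rw [hp1]; exact Function.update_of_ne (Ne.symm hij) _ _
  have hp2i : p2 i = p i := by rw [hp2]; exact Function.update_of_ne hij _ _
  have hp2j : p2 j = u j := by rw [hp2]; simp
  have haw1 : G.Adj ↑wD ↑wD1 := by
    rw [adjD wD wD1, hψ1, dfs_comm, hp1, dfs_update_left p i hui]
    simp
  have haw2 : G.Adj ↑wD ↑wD2 := by
    rw [adjD wD wD2, hψ2, dfs_comm, hp2, dfs_update_left p j huj]
    simp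
  have hzw1 : G.Adj ↑zD ↑wD1 := by
    rw [adjD zD wD1, hψ1, hψz, hq, dfs_update_left p1 j (by rw [hp1j]; exact huj)]
    simp
  have hqalt : q = Function.update p2 i (u i) := by
    rw [hq, hp1, hp2, Function.update_comm hij]
  have hzw2 : G.Adj ↑zD ↑wD2 := by
    rw [adjD zD wD2, hψ2, hψz, hqalt, dfs_update_left p2 i (by rw [hp2i]; exact hui)]
    simp
  have hdfs12 : dfs p1 p2 = {i, j} := dfs_updates_pair p hij hui huj
  have hnadj12 : ¬ G.Adj ↑wD1 ↑wD2 := by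
    rw [adjD wD1 wD2, hψ1, hψ2, hdfs12]
    rw [Finset.card_pair hij]
    omega
  have hdfsqp : dfs q p = {i, j} := by
    rw [hq, hp1]
    exact dfs_two_updates p hij hui huj
  have hne12 : (wD1 : V) ≠ (wD2 : V) := by
    intro h
    have : wD1 = wD2 := Subtype.ext h
    have hpp : p1 = p2 := by rw [← hψ1, ← hψ2, this]
    have := congrFun hpp i
    rw [hp1i, hp2i] at this
    exact hui this
  have hnewz : (wD : V) ≠ (zD : V) := by
    intro h
    have : wD = zD := Subtype.ext h
    have hpp : p = q := by rw [hp, ← hψz, this]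
    have := congrFun hpp i
    rw [hqalt, Function.update_self] at this
    exact hui this.symm
  have hnadjwz : ¬ G.Adj ↑wD ↑zD := by
    rw [adjD wD zD, hψz, dfs_comm, hdfsqp, Finset.card_pair hij]
    omega
  -- now work inside C
  set c1 : (C : Set V) := ⟨↑wD1, Finset.mem_coe.mpr hw1C⟩ with hc1
  set c2 : (C : Set V) := ⟨↑wD2, Finset.mem_coe.mpr hw2C⟩ with hc2
  set cz : (C : Set V) := ⟨↑zD, Finset.mem_coe.mpr hzC⟩ with hcz
  have hadjz1 : (dfs (φ cz) (φ c1)).card = 1 := (adjC cz c1).mp hzw1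
  have hadjz2 : (dfs (φ cz) (φ c2)).card = 1 := (adjC cz c2).mp hzw2
  have hc12ne : φ c1 ≠ φ c2 := by
    intro h
    exact hne12 (congrArg (fun t : (C : Set V) => (t : V)) (φ.injective h))
  have hcard12 : (dfs (φ c1) (φ c2)).card = 2 := by
    have hle : (dfs (φ c1) (φ c2)).card ≤ 2 := by
      calc (dfs (φ c1) (φ c2)).card
          ≤ (dfs (φ c1) (φ cz) ∪ dfs (φ cz) (φ c2)).card :=
            Finset.card_le_card (dfs_triangle _ _ _)
        _ ≤ (dfs (φ c1) (φ cz)).card + (dfs (φ cz) (φ c2)).card := Finset.card_union_le _ _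
        _ ≤ 2 := by rw [dfs_comm (φ c1) (φ cz)]; omega
    have hne0 : (dfs (φ c1) (φ c2)).card ≠ 0 := by
      intro h
      exact hc12ne (eq_of_dfs_card_zero h)
    have hne1 : (dfs (φ c1) (φ c2)).card ≠ 1 := by
      intro h
      exact hnadj12 ((adjC c1 c2).mpr h)
    omega
  set r : Fin n → Bool := fun k0 => xor (φ cz k0) (xor (φ c1 k0) (φ c2 k0)) with hr
  have hr1 : dfs r (φ c1) = dfs (φ cz) (φ c2) := by
    ext k0
    rw [mem_dfs, mem_dfs]
    exact xor_ne_iff (φ cz k0) (φ c1 k0) (φ c2 k0)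
  have hr2 : dfs r (φ c2) = dfs (φ cz) (φ c1) := by
    ext k0
    rw [mem_dfs, mem_dfs]
    exact xor_ne_iff2 (φ cz k0) (φ c1 k0) (φ c2 k0)
  have hrz : dfs r (φ cz) = dfs (φ c1) (φ c2) := by
    ext k0
    rw [mem_dfs, mem_dfs]
    exact xor_ne_iff3 (φ cz k0) (φ c1 k0) (φ c2 k0)
  set wCn : (C : Set V) := φ.symm r with hwCn
  have hφr : φ wCn = r := φ.apply_symm_apply r
  have hadjw'1 : G.Adj ↑wCn ↑wD1 := by
    rw [adjC wCn c1, hφr, hr1]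
    exact hadjz2
  have hadjw'2 : G.Adj ↑wCn ↑wD2 := by
    rw [adjC wCn c2, hφr, hr2]
    exact hadjz1
  have hw'ne_z : (wCn : V) ≠ (zD : V) := by
    intro h
    have : wCn = cz := Subtype.ext h
    have hreq : r = φ cz := by rw [← hφr, this]
    have : (dfs r (φ cz)).card = 0 := by rw [hreq]; simp [dfs]
    rw [hrz, hcard12] at this
    omega
  by_cases hww' : (wD : V) = (wCn : V)
  · rw [hww']
    exact Finset.mem_coe.mp wCn.2
  · exact (median_no_K23 hconn hmed hne12 hnadj12
      hzw1.symm hzw2.symm hadjw'1.symm hadjw'2.symm haw1.symm haw2.symm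
      hw'ne_z.symm (Ne.symm hnewz) (fun h => hww' h.symm)).elim

lemma card_eq_of_iso {V : Type*} {G : SimpleGraph V} (S : Finset V) {k : ℕ}
    (e : G.induce (S : Set V) ≃g cubeGraph k) : S.card = 2 ^ k := by
  classical
  have h := Fintype.card_congr e.toEquiv
  simpa [Fintype.card_fun] using h

lemma facet_iso {V : Type*} (G : SimpleGraph V) (S : Set V) {m : ℕ}
    (φ : G.induce S ≃g cubeGraph (m + 1)) (i : Fin (m + 1)) (b : Bool)
    (T : Set V) (hT : ∀ y, y ∈ T ↔ ∃ h : y ∈ S, φ ⟨y, h⟩ i = b) :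
    Nonempty (G.induce T ≃g cubeGraph m) := by
  classical
  have hmem : ∀ y : T, (y : V) ∈ S := fun y => ((hT ↑y).mp y.2).choose
  have hbval : ∀ y : T, φ ⟨↑y, hmem y⟩ i = b := fun y => ((hT ↑y).mp y.2).choose_spec
  set f : T → (Fin m → Bool) := fun y j => φ ⟨↑y, hmem y⟩ (i.succAbove j) with hf
  have hinj : Function.Injective f := by
    intro y1 y2 h
    have hφ : φ ⟨↑y1, hmem y1⟩ = φ ⟨↑y2, hmem y2⟩ := by
      funext k
      by_cases hk : k = i
      · subst hk; rw [hbval y1, hbval y2]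
      · obtain ⟨j, hj⟩ := Fin.exists_succAbove_eq hk
        have := congrFun h j
        simpa [hf, hj] using this
    have := φ.injective hφ
    exact Subtype.ext (congrArg (fun t : S => (t : V)) this)
  have hsurj : Function.Surjective f := by
    intro g
    set tv : Fin (m + 1) → Bool :=
      fun k => if hk : k = i then b else g ((finSuccAboveEquiv i).symm ⟨k, hk⟩) with htv
    set y' : S := φ.symm tv with hy'
    have hφy' : φ y' = tv := φ.apply_symm_apply tv
    have hyT : (y' : V) ∈ T := by
      rw [hT]
      refine ⟨y'.2, ?_⟩
      have : (⟨↑y', y'.2⟩ : S) = y' := Subtype.ext rfl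
      rw [this, hφy', htv]
      simp
    refine ⟨⟨↑y', hyT⟩, ?_⟩
    funext j
    have hcoe : (⟨↑(⟨(y' : V), hyT⟩ : T), hmem ⟨↑y', hyT⟩⟩ : S) = y' := Subtype.ext rfl
    have h1 : f ⟨↑y', hyT⟩ j = tv (i.succAbove j) := by
      rw [hf]
      simp only []
      rw [hcoe, hφy']
    rw [h1]
    simp only [htv]
    have hne : i.succAbove j ≠ i := Fin.succAbove_ne i j
    rw [dif_neg hne]
    have : (⟨i.succAbove j, hne⟩ : {x : Fin (m+1) // x ≠ i}) = finSuccAboveEquiv i j :=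
      Subtype.ext (by rw [finSuccAboveEquiv_apply])
    rw [this, Equiv.symm_apply_apply]
  refine ⟨⟨Equiv.ofBijective f ⟨hinj, hsurj⟩, ?_⟩⟩
  intro y1 y2
  show (cubeGraph m).Adj (f y1) (f y2) ↔ (G.induce T).Adj y1 y2
  have hGadj : (G.induce T).Adj y1 y2 ↔
      (cubeGraph (m+1)).Adj (φ ⟨↑y1, hmem y1⟩) (φ ⟨↑y2, hmem y2⟩) := by
    rw [φ.map_adj_iff]
    exact Iff.rfl
  rw [hGadj, cube_adj_iff, cube_adj_iff]
  have hcards := dfs_card_succAbove i (u := φ ⟨↑y1, hmem y1⟩) (v := φ ⟨↑y2, hmem y2⟩)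
    (by rw [hbval y1, hbval y2])
  rw [← hcards]

/-- Corners lie on the boundary: if `v` is a corner of a finite median graph `G` with
corner cube `C` and opposite vertex `o`, then every vertex of `C` other than `o` is a
vertex of the combinatorial boundary of `X_cube(G)`. -/
theorem median_corner_on_boundary {V : Type*} [Fintype V] (G : SimpleGraph V)
    (hconn : G.Connected) (hmed : MedianGraph G)
    (v : V) (C : Finset V) (n : ℕ)
    (hiso : Nonempty (G.induce (C : Set V) ≃g cubeGraph n))
    (hv : v ∈ C) (hnbrs : ∀ u : V, G.Adj v u → u ∈ C)
    (o : V) (ho : o ∈ C) (hopp : G.dist v o = n) :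
    ∀ x ∈ C, x ≠ o → x ∈ boundaryVertices G := by
  classical
  obtain ⟨φ⟩ := hiso
  intro x hx hxo
  have hcardC : C.card = 2 ^ n := card_eq_of_iso C φ
  obtain ⟨m, rfl⟩ : ∃ m, n = m + 1 := by
    cases n with
    | zero =>
      exfalso
      have h1 : C.card = 1 := by simpa using hcardC
      obtain ⟨c0, hc0⟩ := Finset.card_eq_one.mp h1
      rw [hc0] at hx ho
      simp only [Finset.mem_singleton] at hx ho
      exact hxo (hx.trans ho.symm)
    | succ m => exact ⟨m, rfl⟩
  set vS : (C : Set V) := ⟨v, Finset.mem_coe.mpr hv⟩ with hvS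
  set oS : (C : Set V) := ⟨o, Finset.mem_coe.mpr ho⟩ with hoS
  set xS : (C : Set V) := ⟨x, Finset.mem_coe.mpr hx⟩ with hxS
  have hanti : ∀ i, φ vS i ≠ φ oS i := by
    have h1 : G.dist v o ≤ (dfs (φ vS) (φ oS)).card := dist_le_dfs_card φ vS oS
    have h2 : (dfs (φ vS) (φ oS)).card ≤ m + 1 := by
      calc (dfs (φ vS) (φ oS)).card ≤ (univ : Finset (Fin (m+1))).card :=
            Finset.card_le_card (Finset.subset_univ _)
        _ = m + 1 := by simp
    have h3 : (dfs (φ vS) (φ oS)).card = m + 1 := by omega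
    have huniv : dfs (φ vS) (φ oS) = univ := Finset.eq_univ_of_card _ (by simpa using h3)
    intro i
    exact mem_dfs.mp (huniv ▸ Finset.mem_univ i)
  obtain ⟨i, hi⟩ : ∃ i, φ xS i ≠ φ oS i := by
    by_contra h
    push_neg at h
    have : φ xS = φ oS := funext h
    exact hxo (congrArg (fun t : (C : Set V) => (t : V)) (φ.injective this))
  set b : Bool := φ vS i with hb
  have hxb : φ xS i = b := by
    have h1 := hanti i
    rw [← hb] at h1
    cases hb1 : φ xS i <;> cases hb2 : φ oS i <;> cases hb3 : b <;>
      simp_all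
  set F : Finset V := C.filter (fun y => ∃ h : y ∈ C, φ ⟨y, Finset.mem_coe.mpr h⟩ i = b) with hF
  have hmemF : ∀ y, y ∈ F ↔ ∃ h : y ∈ C, φ ⟨y, Finset.mem_coe.mpr h⟩ i = b := by
    intro y
    rw [hF, Finset.mem_filter]
    constructor
    · exact fun h => h.2
    · exact fun h => ⟨h.choose, h⟩
  obtain ⟨e⟩ := facet_iso G (C : Set V) φ i b (F : Set V) (by
    intro y
    rw [Finset.mem_coe, hmemF y]
    constructor
    · rintro ⟨h, hh⟩; exact ⟨Finset.mem_coe.mpr h, hh⟩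
    · rintro ⟨h, hh⟩; exact ⟨Finset.mem_coe.mp h, hh⟩)
  have hcardF : F.card = 2 ^ m := card_eq_of_iso F e
  have hFsub : F ⊆ C := Finset.filter_subset _ _
  have hFC : F ⊂ C := by
    refine hFsub.ssubset_of_ne ?_
    intro h
    rw [h] at hcardF
    rw [hcardF, pow_succ] at hcardC
    have hpos : 0 < 2 ^ m := pow_pos (by norm_num) m
    omega
  have hxF : x ∈ F := (hmemF x).mpr ⟨hx, hxb⟩
  have hvF : v ∈ F := (hmemF v).mpr ⟨hv, hb.symm⟩
  have hFcell : F ∈ cells G := ⟨⟨x, hxF⟩, ⟨m, ⟨e⟩⟩⟩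
  have hCcell : C ∈ cells G := ⟨⟨v, hv⟩, ⟨m + 1, ⟨φ⟩⟩⟩
  have hcard2 : C.card = 2 * F.card := by
    rw [hcardC, hcardF, pow_succ]
    ring
  refine ⟨F, hFcell, hxF, ?_, C, ⟨hCcell, hFC, hcard2.symm ▸ rfl⟩, ?_⟩
  · rintro ⟨-, hmax⟩
    exact hmax C hCcell hFC
  · rintro D ⟨hDcell, hFD, hDcard⟩
    have hvD : v ∈ D := hFD.subset hvF
    have hDC : D ⊆ C := cell_subset_of_corner G hconn hmed v C φ hv hnbrs D hDcell.2 hvD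
    apply Finset.eq_of_subset_of_card_le hDC
    rw [hDcard, ← hcard2]
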